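/- For any real numbers t₁, …, t_k, any ℓ, N₀ ∈ ℕ*, there exist r₀ ≥ 1 and integers q₁ < ⋯ < q_{r₀} with q₁ ≥ 2N₀ such that 1/(2ℓ^k) < ∑_{i=1}^{r₀} 1/q_i < 1/ℓ^k and ‖q_i t_s‖ ≤ √k/ℓ for all 1 ≤ i ≤ r₀ and 1 ≤ s ≤ k, where ‖x‖ denotes the distance from x to the nearest integer. -/

import Mathlib

/-- Distance from a real number to the nearest integer. -/
noncomputable def distToInt (x : ℝ) : ℝ := |x - round x|

lemma distToInt_le_abs_sub (x : ℝ) (n : ℤ) : distToInt x ≤ |x - n| := by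
  rcases le_or_gt (1/2 : ℝ) |x - n| with h | h
  · exact (abs_sub_round x).trans h
  · have hn : round x = n := by
      rw [round_eq]
      apply Int.floor_eq_iff.2
      rw [abs_lt] at h
      constructor
      · push_cast; linarith
      · push_cast; linarith
    rw [distToInt, hn]

/-- Pigeonhole: among `{0, ..., Q-1}` there are at least `Q / ℓ^k - 1 - B` numbers `d`
satisfying the simultaneous approximation property (plus `B ≤ d`). -/
lemma count_bound {p : ℕ → Prop} [DecidablePred p] (k ℓ B : ℕ) (hℓ : 0 < ℓ)
    (t : Fin k → ℝ)
    (hp : ∀ d : ℕ, B ≤ d → (∀ s, distToInt ((d : ℝ) * t s) ≤ 1 / ℓ) → p d) (Q : ℕ) :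
    Q / ℓ ^ k ≤ Nat.count p Q + 1 + B := by
  set L := ℓ ^ k with hLdef
  set m := Q / L with hmdef
  rcases le_or_gt m (B + 1) with hm | hm
  · omega
  -- box map
  have hfr : ∀ d : ℕ, ∀ s : Fin k, (⌊(ℓ : ℝ) * Int.fract ((d : ℝ) * t s)⌋).toNat < ℓ := by
    intro d s
    have h0 : (0:ℝ) ≤ (ℓ : ℝ) * Int.fract ((d : ℝ) * t s) := by
      have := Int.fract_nonneg ((d : ℝ) * t s)
      positivity
    have h1 : (ℓ : ℝ) * Int.fract ((d : ℝ) * t s) < ℓ := by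
      have := Int.fract_lt_one ((d : ℝ) * t s)
      have hl : (0:ℝ) < ℓ := by exact_mod_cast hℓ
      nlinarith
    have hf1 : ⌊(ℓ : ℝ) * Int.fract ((d : ℝ) * t s)⌋ < (ℓ : ℤ) := by
      apply Int.floor_lt.2; exact_mod_cast h1
    have hf0 : 0 ≤ ⌊(ℓ : ℝ) * Int.fract ((d : ℝ) * t s)⌋ := Int.floor_nonneg.2 h0
    omega
  set f : ℕ → (Fin k → Fin ℓ) := fun d s => ⟨(⌊(ℓ : ℝ) * Int.fract ((d : ℝ) * t s)⌋).toNat, hfr d s⟩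
    with hfdef
  have hne : (Finset.univ : Finset (Fin k → Fin ℓ)).Nonempty := by
    haveI : NeZero ℓ := ⟨hℓ.ne'⟩
    exact Finset.univ_nonempty
  have hcard : (Finset.univ : Finset (Fin k → Fin ℓ)).card * m ≤ (Finset.range Q).card := by
    rw [Finset.card_univ, Fintype.card_fun, Fintype.card_fin, Fintype.card_fin,
      Finset.card_range]
    calc L * m = m * L := mul_comm _ _
    _ ≤ Q := Nat.div_mul_le_self Q L
  obtain ⟨y, -, hy⟩ := Finset.exists_le_card_fiber_of_mul_le_card_of_maps_to
    (fun a _ => Finset.mem_univ (f a)) hne hcard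
  set F := {x ∈ Finset.range Q | f x = y} with hFdef
  have hFne : F.Nonempty := Finset.card_pos.1 (by omega)
  set q₀ := F.min' hFne with hq0
  have hq0F : q₀ ∈ F := F.min'_mem hFne
  -- the good differences
  set G := (F.erase q₀).image (· - q₀) with hGdef
  have hGcard : G.card = F.card - 1 := by
    rw [hGdef, Finset.card_image_of_injOn, Finset.card_erase_of_mem hq0F]
    intro a ha b hb hab
    have ha' : q₀ ≤ a := F.min'_le a (Finset.mem_of_mem_erase ha)
    have hb' : q₀ ≤ b := F.min'_le b (Finset.mem_of_mem_erase hb)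
    simp only at hab
    omega
  have hGgood : ∀ d ∈ G, d < Q ∧ (B ≤ d → p d) := by
    intro d hd
    rw [hGdef, Finset.mem_image] at hd
    obtain ⟨q, hq, rfl⟩ := hd
    have hqF : q ∈ F := Finset.mem_of_mem_erase hq
    have hqQ : q < Q := by
      have := Finset.mem_filter.1 hqF
      exact Finset.mem_range.1 this.1
    have hle : q₀ ≤ q := F.min'_le q hqF
    constructor
    · omega
    intro hB
    apply hp _ hB
    intro s
    -- same box
    have hqy : f q = y := (Finset.mem_filter.1 hqF).2
    have hq0y : f q₀ = y := (Finset.mem_filter.1 hq0F).2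
    have hbox : (⌊(ℓ : ℝ) * Int.fract ((q : ℝ) * t s)⌋) =
        (⌊(ℓ : ℝ) * Int.fract ((q₀ : ℝ) * t s)⌋) := by
      have h1 : f q s = f q₀ s := by rw [hqy, hq0y]
      have h2 := congrArg Fin.val h1
      simp only [hfdef] at h2
      have g0 : 0 ≤ ⌊(ℓ : ℝ) * Int.fract ((q : ℝ) * t s)⌋ :=
        Int.floor_nonneg.2 (by have := Int.fract_nonneg ((q : ℝ) * t s); positivity)
      have g1 : 0 ≤ ⌊(ℓ : ℝ) * Int.fract ((q₀ : ℝ) * t s)⌋ :=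
        Int.floor_nonneg.2 (by have := Int.fract_nonneg ((q₀ : ℝ) * t s); positivity)
      omega
    set x := (q : ℝ) * t s with hx
    set z := (q₀ : ℝ) * t s with hz
    have hlR : (0:ℝ) < ℓ := by exact_mod_cast hℓ
    have hfd : |Int.fract x - Int.fract z| ≤ 1 / ℓ := by
      have b1 : (⌊(ℓ:ℝ) * Int.fract x⌋ : ℝ) ≤ (ℓ:ℝ) * Int.fract x := Int.floor_le _
      have b2 : (ℓ:ℝ) * Int.fract x < ⌊(ℓ:ℝ) * Int.fract x⌋ + 1 := Int.lt_floor_add_one _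
      have b3 : (⌊(ℓ:ℝ) * Int.fract z⌋ : ℝ) ≤ (ℓ:ℝ) * Int.fract z := Int.floor_le _
      have b4 : (ℓ:ℝ) * Int.fract z < ⌊(ℓ:ℝ) * Int.fract z⌋ + 1 := Int.lt_floor_add_one _
      rw [hbox] at b1 b2
      rw [abs_le]
      constructor
      · rw [neg_le, ← sub_nonneg]
        have h1 : (1 / (ℓ:ℝ)) * ℓ = 1 := by field_simp
        nlinarith [b2, b3]
      · rw [le_div_iff₀ hlR]
        nlinarith
    have hcast : ((q - q₀ : ℕ) : ℝ) * t s = x - z := by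
      rw [Nat.cast_sub hle]; ring
    rw [hcast]
    calc distToInt (x - z) ≤ |x - z - ((⌊x⌋ - ⌊z⌋ : ℤ) : ℝ)| :=
          distToInt_le_abs_sub _ _
    _ = |Int.fract x - Int.fract z| := by
          congr 1
          rw [Int.fract, Int.fract]
          push_cast
          ring
    _ ≤ 1 / ℓ := hfd
  -- count
  set G' := {d ∈ G | B ≤ d} with hG'def
  have hsub : G' ⊆ {x ∈ Finset.range Q | p x} := by
    intro d hd
    rw [hG'def, Finset.mem_filter] at hd
    obtain ⟨hdG, hdB⟩ := hd
    obtain ⟨h1, h2⟩ := hGgood d hdG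
    exact Finset.mem_filter.2 ⟨Finset.mem_range.2 h1, h2 hdB⟩
  have hsplit : G.card ≤ G'.card + B := by
    have h6 : G ⊆ G' ∪ Finset.range B := by
      intro d hd
      by_cases hB : B ≤ d
      · exact Finset.mem_union_left _ (Finset.mem_filter.2 ⟨hd, hB⟩)
      · exact Finset.mem_union_right _ (Finset.mem_range.2 (by omega))
    calc G.card ≤ (G' ∪ Finset.range B).card := Finset.card_le_card h6
    _ ≤ G'.card + (Finset.range B).card := Finset.card_union_le _ _
    _ = G'.card + B := by rw [Finset.card_range]
  have hfin : Nat.count p Q = {x ∈ Finset.range Q | p x}.card := Nat.count_eq_card_filter_range p Q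
  have := Finset.card_le_card hsub
  omega

open Filter

theorem stmt9 (k : ℕ) (hk : 0 < k) (t : Fin k → ℝ) (ℓ N₀ : ℕ) (hℓ : 0 < ℓ)
    (hN₀ : 0 < N₀) :
    ∃ (r₀ : ℕ) (q : Fin r₀ → ℕ), 1 ≤ r₀ ∧ StrictMono q ∧
      (∀ i, 2 * N₀ ≤ q i) ∧
      (1 / (2 * (ℓ : ℝ) ^ k) < ∑ i, (1 : ℝ) / q i) ∧
      (∑ i, (1 : ℝ) / q i < 1 / (ℓ : ℝ) ^ k) ∧
      ∀ (i : Fin r₀) (s : Fin k), distToInt ((q i : ℝ) * t s) ≤ Real.sqrt k / ℓ := by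
  classical
  set L : ℕ := ℓ ^ k with hLdef
  have hL : 0 < L := pow_pos hℓ k
  set B : ℕ := max (2 * N₀) (2 * L + 1) with hBdef
  set p : ℕ → Prop := fun d => B ≤ d ∧ ∀ s, distToInt ((d : ℝ) * t s) ≤ 1 / ℓ with hpdef
  have hcount : ∀ Q, Q / L ≤ Nat.count p Q + 1 + B := by
    intro Q
    exact count_bound k ℓ B hℓ t (fun d h1 h2 => ⟨h1, h2⟩) Q
  have hinf : (setOf p).Infinite := by
    by_contra h'
    rw [Set.not_infinite] at h'
    have hc : Nat.count p (L * (h'.toFinset.card + 2 + B)) ≤ h'.toFinset.card :=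
      Nat.count_le_card h' (L * (h'.toFinset.card + 2 + B))
    have h2 := hcount (L * (h'.toFinset.card + 2 + B))
    rw [Nat.mul_div_cancel_left _ hL] at h2
    omega
  set a : ℕ → ℕ := fun j => Nat.nth p j with hadef
  have ha_mem : ∀ j, p (a j) := fun j => Nat.nth_mem_of_infinite hinf j
  have ha_mono : StrictMono a := Nat.nth_strictMono hinf
  have ha_pos : ∀ j, 0 < a j := fun j => lt_of_lt_of_le (by omega) (ha_mem j).1
  have ha_bound : ∀ j, a j < L * (j + 2 + B) := by
    intro j
    have h1 := hcount (a j)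
    rw [Nat.count_nth_of_infinite hinf] at h1
    have h2 : a j / L < j + 2 + B := by omega
    have h3 := (Nat.div_lt_iff_lt_mul hL).1 h2
    calc a j < (j + 2 + B) * L := h3
    _ = L * (j + 2 + B) := mul_comm _ _
  set D : ℕ := L * (2 + B) with hDdef
  have hD : 0 < D := by positivity
  have hterm : ∀ j : ℕ, (1 : ℝ) / D * (1 / (j + 1)) ≤ 1 / a j := by
    intro j
    have h1 : a j < D * (j + 1) := by
      calc a j < L * (j + 2 + B) := ha_bound j
      _ ≤ L * ((2 + B) * (j + 1)) := by
          apply Nat.mul_le_mul_left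
          nlinarith
      _ = D * (j + 1) := by ring
    have h2 : (0:ℝ) < a j := by exact_mod_cast ha_pos j
    have h3 : (a j : ℝ) ≤ D * (j + 1) := by exact_mod_cast h1.le
    rw [one_div_mul_one_div]
    apply one_div_le_one_div_of_le h2
    push_cast
    push_cast at h3
    linarith
  have hdiv : Tendsto (fun m => ∑ j ∈ Finset.range m, (1:ℝ) / a j) atTop atTop := by
    apply tendsto_atTop_mono (f := fun m => (1:ℝ)/D * ∑ j ∈ Finset.range m, (1:ℝ)/(j+1))
    · intro m
      rw [Finset.mul_sum]
      exact Finset.sum_le_sum fun j _ => hterm j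
    · exact Tendsto.const_mul_atTop (by positivity) Real.tendsto_sum_range_one_div_nat_succ_atTop
  set τ : ℝ := 1 / (2 * (L : ℝ)) with hτdef
  have hτpos : 0 < τ := by positivity
  have hex : ∃ m, τ < ∑ j ∈ Finset.range m, (1:ℝ) / a j := (hdiv.eventually_gt_atTop τ).exists
  set m := Nat.find hex with hmdef
  have hmspec : τ < ∑ j ∈ Finset.range m, (1:ℝ) / a j := Nat.find_spec hex
  have hm1 : 1 ≤ m := by
    by_contra h
    have hm0 : m = 0 := by omega
    rw [hm0, Finset.sum_range_zero] at hmspec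
    linarith
  have hLcast : (L : ℝ) = (ℓ : ℝ) ^ k := by rw [hLdef]; push_cast; ring
  have hupper : ∑ j ∈ Finset.range m, (1:ℝ) / a j < 1 / (ℓ : ℝ) ^ k := by
    have hprev : ¬ τ < ∑ j ∈ Finset.range (m - 1), (1:ℝ) / a j := Nat.find_min hex (by omega)
    push_neg at hprev
    have hsucc : m - 1 + 1 = m := by omega
    have hsum : ∑ j ∈ Finset.range m, (1:ℝ) / a j
        = ∑ j ∈ Finset.range (m - 1), (1:ℝ) / a j + 1 / a (m - 1) := by
      conv_lhs => rw [← hsucc]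
      rw [Finset.sum_range_succ]
    have hlast : (1:ℝ) / a (m - 1) < τ := by
      have hB2 : 2 * L + 1 ≤ a (m - 1) := le_trans (le_max_right _ _) (ha_mem (m - 1)).1
      have hpos : (0:ℝ) < 2 * (L:ℝ) := by positivity
      have hc : (2 * (L:ℝ)) < a (m - 1) := by
        have : (2 * L + 1 : ℝ) ≤ (a (m-1) : ℝ) := by exact_mod_cast hB2
        push_cast at this ⊢
        linarith
      rw [hτdef]
      apply one_div_lt_one_div_of_lt hpos hc
    rw [hsum, ← hLcast]
    have : (1:ℝ) / L = τ + τ := by rw [hτdef]; field_simp; ring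
    rw [this]
    linarith
  have hone_le_sqrt : (1:ℝ) ≤ Real.sqrt k := by
    rw [Real.one_le_sqrt]
    · exact_mod_cast hk
  refine ⟨m, fun i => a i, hm1, ?_, ?_, ?_, ?_, ?_⟩
  · intro i j hij
    exact ha_mono (by exact_mod_cast hij)
  · intro i
    exact le_trans (le_trans (by omega) (le_max_left (2 * N₀) (2 * L + 1))) (ha_mem i).1
  · rw [Fin.sum_univ_eq_sum_range (fun j => (1:ℝ) / a j) m]
    calc 1 / (2 * (ℓ:ℝ) ^ k) = τ := by rw [hτdef, hLcast]
    _ < _ := hmspec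
  · rw [Fin.sum_univ_eq_sum_range (fun j => (1:ℝ) / a j) m]
    exact hupper
  · intro i s
    calc distToInt ((a i : ℝ) * t s) ≤ 1 / ℓ := (ha_mem i).2 s
    _ ≤ Real.sqrt k / ℓ := by
        apply div_le_div_of_nonneg_right ?_ ?_ |>.trans_eq rfl
        all_goals first | exact hone_le_sqrt | positivity
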